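/- For all complex numbers a, b and every real α ≥ 0, one has |(a-b) + α(a|a|² - b|b|²)| ≥ |a-b|·(1 + α(|a|² + |b|²)/2). -/

import Mathlib

theorem stmt0 (a b : ℂ) (α : ℝ) (hα : 0 ≤ α) :
    ‖a - b‖ * (1 + α * (‖a‖ ^ 2 + ‖b‖ ^ 2) / 2) ≤
      ‖(a - b) +
        (α : ℂ) * (a * (‖a‖ : ℂ) ^ 2 - b * (‖b‖ : ℂ) ^ 2)‖ := by
  set z : ℂ := a - b with hz
  set w : ℂ := a * (‖a‖ : ℂ) ^ 2 - b * (‖b‖ : ℂ) ^ 2 with hw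
  set A := ‖a‖ with hA
  set B := ‖b‖ with hB
  set s : ℝ := A ^ 2 + B ^ 2 with hs
  have hA2 : A ^ 2 = Complex.normSq a := Complex.sq_norm a
  have hB2 : B ^ 2 = Complex.normSq b := Complex.sq_norm b
  -- key: Re (z * conj w) ≥ |z|^2 * s / 2
  have hkey : (‖z‖) ^ 2 * s / 2 ≤ (z * (starRingEnd ℂ) w).re := by
    have hzsq : (‖z‖) ^ 2 = Complex.normSq z := Complex.sq_norm z
    rw [hzsq, hs, hA2, hB2]
    simp only [hz, hw, ← Complex.ofReal_pow, hA2, hB2, Complex.normSq_apply,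
      Complex.mul_re, Complex.mul_im, Complex.sub_re, Complex.sub_im,
      Complex.conj_re, Complex.conj_im,
      Complex.ofReal_re, Complex.ofReal_im, map_sub, map_mul, Complex.conj_ofReal]
    ring_nf
    nlinarith [sq_nonneg (a.re ^ 2 + a.im ^ 2 - b.re ^ 2 - b.im ^ 2),
      sq_nonneg (a.re - b.re), sq_nonneg (a.im - b.im)]
  -- square of RHS
  have hsq : ‖z + (α:ℂ) * w‖ ^ 2
      = ‖z‖ ^ 2 + 2 * α * (z * (starRingEnd ℂ) w).re + α ^ 2 * ‖w‖ ^ 2 := by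
    rw [Complex.sq_norm, Complex.sq_norm, Complex.sq_norm, Complex.normSq_add]
    simp only [Complex.normSq_mul, Complex.normSq_ofReal, map_mul, Complex.conj_ofReal]
    have h : (z * ((α:ℂ) * (starRingEnd ℂ) w)).re = α * (z * (starRingEnd ℂ) w).re := by
      simp [Complex.mul_re, Complex.mul_im, Complex.ofReal_re, Complex.ofReal_im]
      ring
    rw [h]; ring
  have hcs : (‖z‖) ^ 2 * s / 2 ≤ ‖z‖ * ‖w‖ := by
    calc (‖z‖) ^ 2 * s / 2 ≤ (z * (starRingEnd ℂ) w).re := hkey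
    _ ≤ ‖z * (starRingEnd ℂ) w‖ := Complex.re_le_norm _
    _ = ‖z‖ * ‖w‖ := by rw [norm_mul, Complex.norm_conj]
  have hs0 : 0 ≤ s := by positivity
  set Z := ‖z‖ with hZ
  set W := ‖w‖ with hW
  set R := ‖z + (α:ℂ) * w‖ with hR
  set r := (z * (starRingEnd ℂ) w).re with hr
  have hz0 : (0:ℝ) ≤ Z := norm_nonneg z
  have hw0 : (0:ℝ) ≤ W := norm_nonneg w
  have hR0 : (0:ℝ) ≤ R := norm_nonneg _
  clear_value z w A B s Z W R r
  clear hz hw hA hB hA2 hB2 hZ hW hR hr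
  -- Cauchy-Schwarz consequence: Z * s / 2 ≤ W when Z > 0
  have h2 : (Z * s / 2) ^ 2 ≤ W ^ 2 := by
    rcases eq_or_lt_of_le hz0 with h | h
    · rw [← h]; simpa using sq_nonneg W
    · have hle : Z * s / 2 ≤ W := by
        have h' : Z * (Z * s / 2) ≤ Z * W := by nlinarith [hcs]
        exact le_of_mul_le_mul_left h' h
      nlinarith [mul_nonneg hz0 hs0]
  have h1 : α * (Z ^ 2 * s) ≤ 2 * α * r := by
    nlinarith [mul_le_mul_of_nonneg_left hkey (by positivity : (0:ℝ) ≤ 2 * α)]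
  have hsqle : (Z * (1 + α * s / 2)) ^ 2 ≤ R ^ 2 := by
    rw [hsq]
    nlinarith [mul_le_mul_of_nonneg_left h2 (sq_nonneg α)]
  have hL0 : 0 ≤ Z * (1 + α * s / 2) := by positivity
  nlinarith [hsqle, hL0, hR0]
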